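/- Let n ≥ 2, let M be an n-connected binary matroid with |E(M)| ≥ 2n-2, and let T ⊆ E(M) with |T| = n-1. If every cocircuit Q of M with Q ∩ T ≠ ∅ satisfies |Q| ≥ 2|Q ∩ T|, then the element splitting matroid M'_T is n-connected. -/

import Mathlib

open Set

variable {α : Type*}

/-- The rank of a set `X` in a matroid `M`: the maximum size of an independent subset of `X`. -/
noncomputable def mrank (M : Matroid α) (X : Set α) : ℕ :=
  sSup {n | ∃ I, M.Indep I ∧ I ⊆ X ∧ I.ncard = n}

/-- `(A, B)` is a `k`-separation of `M`: a partition of the ground set with both sides of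
size at least `k` and `r(A) + r(B) - r(M) ≤ k - 1` (written additively). -/
def IsKSeparation (M : Matroid α) (k : ℕ) (A B : Set α) : Prop :=
  A ∪ B = M.E ∧ Disjoint A B ∧ k ≤ A.ncard ∧ k ≤ B.ncard ∧
    mrank M A + mrank M B + 1 ≤ mrank M M.E + k

/-- `M` is `n`-connected if it has no `k`-separation for any `k < n`. -/
def NConnected (M : Matroid α) (n : ℕ) : Prop :=
  ∀ k A B, 1 ≤ k → k < n → ¬ IsKSeparation M k A B

/-- A circuit is a minimal dependent set. -/
def MCircuit (M : Matroid α) (C : Set α) : Prop := Minimal M.Dep C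

/-- A cocircuit is a circuit of the dual matroid. -/
def MCocircuit (M : Matroid α) (C : Set α) : Prop := MCircuit M✶ C

/-- A loop is a dependent singleton. -/
def MLoop (M : Matroid α) (e : α) : Prop := M.Dep {e}

/-- A coloop is a loop of the dual, i.e. an element lying in every base. -/
def MColoop (M : Matroid α) (e : α) : Prop := M✶.Dep {e}

/-- `M` is the vector matroid of the family of vectors `φ` over `GF(2)`:
a set is independent iff it lies in the ground set and the corresponding
vectors are linearly independent. -/
def IsRep {W : Type*} [AddCommGroup W] [Module (ZMod 2) W] (M : Matroid α) (φ : α → W) : Prop :=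
  ∀ I : Set α, M.Indep I ↔ I ⊆ M.E ∧ LinearIndependent (ZMod 2) (I.restrict φ)

open scoped Classical in
/-- The columns of the element splitting matrix `A'_T`: each original column gets an extra
coordinate (the new row), equal to `1` exactly on the columns labelled by `T`, and a new
column `a` which is `1` in the new row and `0` elsewhere. -/
noncomputable def splitRep {W : Type*} [AddCommGroup W] [Module (ZMod 2) W]
    (φ : α → W) (T : Set α) (a : α) : α → W × ZMod 2 :=
  fun x => if x = a then (0, 1) else (φ x, if x ∈ T then 1 else 0)

/-- `N` is the element splitting matroid `M'_T` of the binary matroid `M` (represented by `φ`)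
with respect to `T`, with new element `a`. -/
def IsEleSplit {W : Type*} [AddCommGroup W] [Module (ZMod 2) W]
    (M : Matroid α) (φ : α → W) (T : Set α) (a : α) (N : Matroid α) : Prop :=
  a ∉ M.E ∧ N.E = insert a M.E ∧ IsRep N (splitRep φ T a)

/-- `M` is the contraction `N / a` of the single element `a` from `N`. -/
def ContractElemEq (N : Matroid α) (a : α) (M : Matroid α) : Prop :=
  M.E = N.E \ {a} ∧ ∀ I : Set α,
    M.Indep I ↔ a ∉ I ∧
      ((N.Indep {a} ∧ N.Indep (insert a I)) ∨ (¬ N.Indep {a} ∧ N.Indep I))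



open Submodule Module

section AuxLemmas

section FunExt

variable {K : Type*} [Field K] {V : Type*} [AddCommGroup V] [Module K V]

lemma extend_fun (U : Submodule K V) (f₀ : U →ₗ[K] K) :
    ∃ f : V →ₗ[K] K, ∀ u (h : u ∈ U), f u = f₀ ⟨u, h⟩ := by
  obtain ⟨U', hU'⟩ := U.exists_isCompl
  refine ⟨f₀.comp (U.linearProjOfIsCompl U' hU'), fun u h => ?_⟩
  have : (U.linearProjOfIsCompl U' hU') u = ⟨u, h⟩ :=
    Submodule.linearProjOfIsCompl_apply_left hU' ⟨u, h⟩
  simp [this]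

lemma exists_functional {U : Submodule K V} {v : V} (hv : v ∉ U) :
    ∃ f : V →ₗ[K] K, (∀ u ∈ U, f u = 0) ∧ f v = 1 := by
  set π := U.mkQ with hπ
  have hπv : π v ≠ 0 := by
    simpa [hπ, Submodule.Quotient.mk_eq_zero] using hv
  obtain ⟨g, hg⟩ := extend_fun (K := K) (span K {π v})
      ((LinearEquiv.toSpanNonzeroSingleton K _ (π v) hπv).symm.toLinearMap)
  refine ⟨g.comp π, fun u hu => ?_, ?_⟩
  · have : π u = 0 := (Submodule.Quotient.mk_eq_zero _).2 hu
    simp [this]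
  · have hm : π v ∈ span K {π v} := mem_span_singleton_self _
    have h1 := hg (π v) hm
    have h2 : (LinearEquiv.toSpanNonzeroSingleton K _ (π v) hπv).symm ⟨π v, hm⟩ = 1 := by
      rw [LinearEquiv.symm_apply_eq]
      exact (LinearEquiv.toSpanNonzeroSingleton_one K _ (π v) hπv).symm ▸ rfl
    simpa [h2] using h1

end FunExt

section Prod

variable {W : Type*} [AddCommGroup W] [Module (ZMod 2) W]

lemma zmod2_cases (t : ZMod 2) : t = 0 ∨ t = 1 := by revert t; decide

lemma ker_fst_comp {S : Set (W × ZMod 2)}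
    (h : ((0 : W), (1 : ZMod 2)) ∉ span (ZMod 2) S) :
    LinearMap.ker ((LinearMap.fst (ZMod 2) W (ZMod 2)).comp
      (span (ZMod 2) S).subtype) = ⊥ := by
  rw [LinearMap.ker_eq_bot']
  rintro ⟨⟨w, t⟩, hm⟩ hu
  have hw : w = 0 := hu
  subst hw
  rcases zmod2_cases t with rfl | rfl
  · rfl
  · exact absurd hm h

lemma range_fst_comp (S : Set (W × ZMod 2)) :
    LinearMap.range ((LinearMap.fst (ZMod 2) W (ZMod 2)).comp
      (span (ZMod 2) S).subtype) = span (ZMod 2) (Prod.fst '' S) := by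
  rw [LinearMap.range_comp, Submodule.range_subtype, Submodule.map_span]
  rfl

lemma finrank_span_fst_of_not_mem {S : Set (W × ZMod 2)} (hS : S.Finite)
    (h : ((0 : W), (1 : ZMod 2)) ∉ span (ZMod 2) S) :
    finrank (ZMod 2) (span (ZMod 2) S) =
      finrank (ZMod 2) (span (ZMod 2) (Prod.fst '' S)) := by
  haveI : FiniteDimensional (ZMod 2) (span (ZMod 2) S) :=
    FiniteDimensional.span_of_finite _ hS
  have hrn := LinearMap.finrank_range_add_finrank_ker
    ((LinearMap.fst (ZMod 2) W (ZMod 2)).comp (span (ZMod 2) S).subtype)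
  rw [ker_fst_comp h, finrank_bot, range_fst_comp] at hrn
  omega

lemma finrank_span_fst_of_mem {S : Set (W × ZMod 2)} (hS : S.Finite)
    (h : ((0 : W), (1 : ZMod 2)) ∈ span (ZMod 2) S) :
    finrank (ZMod 2) (span (ZMod 2) S) =
      finrank (ZMod 2) (span (ZMod 2) (Prod.fst '' S)) + 1 := by
  haveI : FiniteDimensional (ZMod 2) (span (ZMod 2) S) :=
    FiniteDimensional.span_of_finite _ hS
  set f := (LinearMap.fst (ZMod 2) W (ZMod 2)).comp (span (ZMod 2) S).subtype with hfdef
  have hrn := LinearMap.finrank_range_add_finrank_ker f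
  have hker : LinearMap.ker f =
      span (ZMod 2) {(⟨((0:W),(1:ZMod 2)), h⟩ : span (ZMod 2) S)} := by
    apply le_antisymm
    · rintro ⟨⟨w, t⟩, hm⟩ hu
      have hw : w = 0 := hu
      subst hw
      rcases zmod2_cases t with rfl | rfl
      · have : (⟨((0:W), (0:ZMod 2)), hm⟩ : span (ZMod 2) S) = 0 := by ext <;> rfl
        rw [this]; exact Submodule.zero_mem _
      · exact subset_span rfl
    · rw [span_le, Set.singleton_subset_iff]
      show f _ = 0
      rfl
  have hone : finrank (ZMod 2) (LinearMap.ker f) = 1 := by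
    rw [hker]
    refine finrank_span_singleton ?_
    intro h0
    have := congrArg (fun u : span (ZMod 2) S => (u : W × ZMod 2).2) h0
    simp at this
  rw [hker] at hrn
  rw [hker] at hone
  rw [hone] at hrn
  rw [hfdef, range_fst_comp] at hrn
  omega

lemma exists_fun_of_notmem (S : Set (W × ZMod 2))
    (h : ((0 : W), (1 : ZMod 2)) ∉ span (ZMod 2) S) :
    ∃ f : W →ₗ[ZMod 2] ZMod 2, ∀ v ∈ S, f v.1 = v.2 := by
  set U := span (ZMod 2) S with hU
  set p : U →ₗ[ZMod 2] W := (LinearMap.fst (ZMod 2) W (ZMod 2)).comp U.subtype with hp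
  have hinj : Function.Injective p := by
    rw [← LinearMap.ker_eq_bot]
    exact ker_fst_comp h
  set e : U ≃ₗ[ZMod 2] LinearMap.range p := LinearEquiv.ofInjective p hinj with he
  set f₀ : (LinearMap.range p) →ₗ[ZMod 2] ZMod 2 :=
    ((LinearMap.snd (ZMod 2) W (ZMod 2)).comp U.subtype).comp e.symm.toLinearMap with hf₀
  obtain ⟨f, hf⟩ := extend_fun (LinearMap.range p) f₀
  refine ⟨f, fun v hv => ?_⟩
  have hvU : v ∈ U := subset_span hv
  have hv1 : v.1 ∈ LinearMap.range p := ⟨⟨v, hvU⟩, rfl⟩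
  have hsymm : e.symm ⟨v.1, hv1⟩ = ⟨v, hvU⟩ := by
    rw [LinearEquiv.symm_apply_eq]
    apply Subtype.coe_injective
    rw [he]
    exact LinearEquiv.ofInjective_apply p (h := hinj) ⟨v, hvU⟩
  rw [hf v.1 hv1]
  show ((LinearMap.snd (ZMod 2) W (ZMod 2)).comp U.subtype) (e.symm ⟨v.1, hv1⟩) = v.2
  rw [hsymm]
  rfl

end Prod

section Rank

variable {W : Type*} [AddCommGroup W] [Module (ZMod 2) W]
variable {M : Matroid α} {φ : α → W}

lemma mrank_le (hfin : M.E.Finite) {X : Set α} (hX : X ⊆ M.E) {I : Set α}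
    (hI : M.Indep I) (hIX : I ⊆ X) : I.ncard ≤ mrank M X := by
  have hbdd : BddAbove {n | ∃ I, M.Indep I ∧ I ⊆ X ∧ I.ncard = n} := by
    refine ⟨X.ncard, fun n hn => ?_⟩
    obtain ⟨J, _, hJX, rfl⟩ := hn
    exact Set.ncard_le_ncard hJX (hfin.subset hX)
  exact le_csSup hbdd ⟨I, hI, hIX, rfl⟩

lemma mrank_attained (hfin : M.E.Finite) {X : Set α} (hX : X ⊆ M.E) :
    ∃ I, M.Indep I ∧ I ⊆ X ∧ I.ncard = mrank M X := by
  have hne : ({n | ∃ I, M.Indep I ∧ I ⊆ X ∧ I.ncard = n} : Set ℕ).Nonempty :=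
    ⟨0, ∅, M.empty_indep, empty_subset _, Set.ncard_empty _⟩
  have hbdd : BddAbove {n | ∃ I, M.Indep I ∧ I ⊆ X ∧ I.ncard = n} := by
    refine ⟨X.ncard, fun n hn => ?_⟩
    obtain ⟨J, _, hJX, rfl⟩ := hn
    exact Set.ncard_le_ncard hJX (hfin.subset hX)
  exact Nat.sSup_mem hne hbdd

lemma indep_injOn (hM : IsRep M φ) {I : Set α} (hI : M.Indep I) : Set.InjOn φ I := by
  have hli := ((hM I).1 hI).2
  intro x hx y hy hxy
  have := hli.injective (a₁ := ⟨x, hx⟩) (a₂ := ⟨y, hy⟩) (by simpa [Set.restrict] using hxy)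
  exact congrArg Subtype.val this

lemma indep_finrank (hM : IsRep M φ) (hfin : M.E.Finite) {I : Set α} (hI : M.Indep I) :
    finrank (ZMod 2) (span (ZMod 2) (φ '' I)) = I.ncard := by
  have hIE := ((hM I).1 hI).1
  have hIfin : I.Finite := hfin.subset hIE
  have hinj : Set.InjOn φ I := indep_injOn hM hI
  have hli : LinearIndependent (ZMod 2) (fun x : (φ '' I) => (x : W)) :=
    (linearIndepOn_iff_image hinj).1 ((hM I).1 hI).2
  haveI : Fintype (φ '' I) := (hIfin.image φ).fintype
  rw [finrank_span_set_eq_card hli, ← Set.ncard_eq_toFinset_card', Set.ncard_image_of_injOn hinj]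

lemma mrank_eq_finrank (hM : IsRep M φ) (hfin : M.E.Finite) {X : Set α} (hX : X ⊆ M.E) :
    mrank M X = finrank (ZMod 2) (span (ZMod 2) (φ '' X)) := by
  have hXfin : X.Finite := hfin.subset hX
  haveI : FiniteDimensional (ZMod 2) (span (ZMod 2) (φ '' X)) :=
    FiniteDimensional.span_of_finite _ (hXfin.image φ)
  refine le_antisymm ?_ ?_
  · obtain ⟨I, hI, hIX, hcard⟩ := mrank_attained hfin hX
    rw [← hcard, ← indep_finrank hM hfin hI]
    exact Submodule.finrank_mono (span_mono (Set.image_mono hIX))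
  · obtain ⟨b, hbs, hbspan, hbli⟩ := exists_linearIndependent (ZMod 2) (φ '' X)
    have hbfin : b.Finite := (hXfin.image φ).subset hbs
    haveI : Fintype b := hbfin.fintype
    have hch : ∀ v : b, ∃ x, x ∈ X ∧ φ x = (v : W) := by
      rintro ⟨v, hv⟩
      obtain ⟨x, hx, rfl⟩ := hbs hv
      exact ⟨x, hx, rfl⟩
    choose g hgX hgφ using hch
    set I : Set α := Set.range g with hIdef
    have hIX : I ⊆ X := by rintro x ⟨v, rfl⟩; exact hgX v
    have himg : φ '' I = b := by
      rw [hIdef, ← Set.range_comp]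
      have : (φ ∘ g) = fun v : b => (v : W) := funext fun v => hgφ v
      rw [this, Subtype.range_coe]
    have hinj : Set.InjOn φ I := by
      rintro x ⟨v, rfl⟩ y ⟨w, rfl⟩ h
      rw [hgφ v, hgφ w] at h
      rw [Subtype.ext h]
    have hIi : M.Indep I := by
      refine (hM I).2 ⟨hIX.trans hX, ?_⟩
      refine (linearIndepOn_iff_image hinj).2 ?_
      rw [himg]; exact hbli
    have h1 : I.ncard = b.ncard := by rw [← himg, Set.ncard_image_of_injOn hinj]
    have h2 : finrank (ZMod 2) (span (ZMod 2) (φ '' X)) = b.ncard := by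
      rw [← hbspan, finrank_span_set_eq_card hbli, ← Set.ncard_eq_toFinset_card']
    rw [h2, ← h1]
    exact mrank_le hfin hX hIi hIX

lemma finrank_span_union_le {K : Type*} [Field K] {V : Type*} [AddCommGroup V] [Module K V]
    {s t : Set V} (hs : s.Finite) (ht : t.Finite) :
    finrank K (span K (s ∪ t)) ≤ finrank K (span K s) + finrank K (span K t) := by
  haveI : FiniteDimensional K (span K s) := FiniteDimensional.span_of_finite _ hs
  haveI : FiniteDimensional K (span K t) := FiniteDimensional.span_of_finite _ ht
  rw [span_union]
  have := Submodule.finrank_sup_add_finrank_inf_eq (span K s) (span K t)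
  omega

end Rank

section Cocycle

variable {W : Type*} [AddCommGroup W] [Module (ZMod 2) W]
variable {M : Matroid α} {φ : α → W} {f g : W →ₗ[ZMod 2] ZMod 2}

/-- The cocycle of `M` determined by a functional `f`. -/
def cocyc (M : Matroid α) (φ : α → W) (f : W →ₗ[ZMod 2] ZMod 2) : Set α :=
  {x ∈ M.E | f (φ x) = 1}

lemma cocyc_subset : cocyc M φ f ⊆ M.E := fun x hx => hx.1

lemma base_span (hM : IsRep M φ) {B : Set α} (hB : M.IsBase B) :
    span (ZMod 2) (φ '' B) = span (ZMod 2) (φ '' M.E) := by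
  refine le_antisymm (span_mono (Set.image_mono hB.subset_ground)) ?_
  rw [span_le]
  rintro v ⟨x, hx, rfl⟩
  by_cases hxB : x ∈ B
  · exact subset_span (mem_image_of_mem _ hxB)
  by_contra h
  have hdep := hB.insert_dep ⟨hx, hxB⟩
  refine hdep.not_indep ((hM _).2 ⟨insert_subset hx hB.subset_ground, ?_⟩)
  have hBi := ((hM B).1 hB.indep).2
  have hinjB : Set.InjOn φ B := indep_injOn hM hB.indep
  have hsetli : LinearIndependent (ZMod 2) ((↑) : (φ '' B) → W) :=
    (linearIndepOn_iff_image hinjB).1 hBi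
  have hins : LinearIndependent (ZMod 2) ((↑) : (insert (φ x) (φ '' B) : Set W) → W) :=
    LinearIndepOn.id_insert hsetli h
  have hinj : Set.InjOn φ (insert x B) := by
    rintro u hu w hw huw
    rcases hu with rfl | hu <;> rcases hw with rfl | hw
    · rfl
    · exact absurd (huw ▸ subset_span (mem_image_of_mem _ hw)) h
    · exact absurd (huw ▸ subset_span (mem_image_of_mem _ hu)) h
    · exact hinjB hu hw huw
  refine (linearIndepOn_iff_image hinj).2 ?_
  rwa [Set.image_insert_eq]

/-- Characterization of dual-dependence via spans. -/
lemma dual_dep_iff (hM : IsRep M φ) (hfin : M.E.Finite) {Q : Set α} (hQE : Q ⊆ M.E) :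
    M✶.Dep Q ↔ span (ZMod 2) (φ '' (M.E \ Q)) ≠ span (ZMod 2) (φ '' M.E) := by
  rw [Matroid.dep_iff, Matroid.dual_ground, and_iff_left hQE]
  have hIndep : M✶.Indep Q ↔
      span (ZMod 2) (φ '' (M.E \ Q)) = span (ZMod 2) (φ '' M.E) := by
    rw [Matroid.dual_indep_iff_exists' (I := Q), and_iff_right hQE]
    constructor
    · rintro ⟨B, hB, hdisj⟩
      have hBsub : B ⊆ M.E \ Q := subset_diff.2 ⟨hB.subset_ground, hdisj.symm⟩
      refine le_antisymm (span_mono (Set.image_mono diff_subset)) ?_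
      rw [← base_span hM hB]
      exact span_mono (Set.image_mono hBsub)
    · intro heq
      obtain ⟨I, hI, hIX, hcard⟩ := mrank_attained hfin (diff_subset (s := M.E) (t := Q))
      refine ⟨I, ?_, Set.disjoint_left.mpr fun {x} hxQ hxI => (hIX hxI).2 hxQ⟩
      rw [Matroid.isBase_iff_maximal_indep]
      refine ⟨hI, fun J hJ hIJ => ?_⟩
      have hJE : J ⊆ M.E := hJ.subset_ground
      have hJle : J.ncard ≤ mrank M M.E := mrank_le hfin Subset.rfl hJ hJE
      have hEq : mrank M (M.E \ Q) = mrank M M.E := by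
        rw [mrank_eq_finrank hM hfin diff_subset, mrank_eq_finrank hM hfin Subset.rfl, heq]
      have hle : J.ncard ≤ I.ncard := by omega
      exact (Set.eq_of_subset_of_ncard_le hIJ hle (hfin.subset hJE)).symm.subset
  exact not_congr hIndep

lemma cocyc_dep (hM : IsRep M φ) (hfin : M.E.Finite) (hne : (cocyc M φ f).Nonempty) :
    M✶.Dep (cocyc M φ f) := by
  rw [dual_dep_iff hM hfin cocyc_subset]
  intro heq
  obtain ⟨x₀, hx₀E, hx₀⟩ := hne
  have hker : span (ZMod 2) (φ '' (M.E \ cocyc M φ f)) ≤ LinearMap.ker f := by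
    rw [span_le]
    rintro v ⟨x, ⟨hxE, hxQ⟩, rfl⟩
    have : f (φ x) ≠ 1 := fun h1 => hxQ ⟨hxE, h1⟩
    rcases zmod2_cases (f (φ x)) with h | h
    · exact h
    · exact absurd h this
  have : φ x₀ ∈ span (ZMod 2) (φ '' (M.E \ cocyc M φ f)) := by
    rw [heq]; exact subset_span (mem_image_of_mem _ hx₀E)
  have h0 : f (φ x₀) = 0 := hker this
  rw [hx₀] at h0
  exact one_ne_zero h0

lemma dep_exists_cocyc (hM : IsRep M φ) (hfin : M.E.Finite) {Q : Set α} (hQ : M✶.Dep Q) :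
    ∃ f : W →ₗ[ZMod 2] ZMod 2, cocyc M φ f ⊆ Q ∧ (cocyc M φ f).Nonempty := by
  have hQE : Q ⊆ M.E := hQ.subset_ground
  have hne := (dual_dep_iff hM hfin hQE).1 hQ
  have hx₀ : ∃ x₀ ∈ M.E, φ x₀ ∉ span (ZMod 2) (φ '' (M.E \ Q)) := by
    by_contra hc
    push_neg at hc
    refine hne (le_antisymm (span_mono (Set.image_mono diff_subset)) ?_)
    rw [span_le]
    rintro v ⟨x, hx, rfl⟩
    exact hc x hx
  obtain ⟨x₀, hx₀E, hx₀⟩ := hx₀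
  obtain ⟨f, hf0, hf1⟩ := exists_functional hx₀
  refine ⟨f, fun x hx => ?_, ⟨x₀, hx₀E, hf1⟩⟩
  by_contra hxQ
  have : φ x ∈ span (ZMod 2) (φ '' (M.E \ Q)) :=
    subset_span (mem_image_of_mem _ ⟨hx.1, hxQ⟩)
  have := hf0 _ this
  rw [hx.2] at this
  exact one_ne_zero this

lemma cocyc_diff (h : cocyc M φ g ⊆ cocyc M φ f) :
    cocyc M φ (f + g) = cocyc M φ f \ cocyc M φ g := by
  ext x
  simp only [cocyc, mem_setOf_eq, mem_diff, LinearMap.add_apply]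
  constructor
  · rintro ⟨hxE, hsum⟩
    refine ⟨⟨hxE, ?_⟩, fun hg => ?_⟩
    · rcases zmod2_cases (f (φ x)) with hf' | hf'
      · rcases zmod2_cases (g (φ x)) with hg' | hg'
        · rw [hf', hg'] at hsum; exact absurd hsum.symm one_ne_zero
        · exact absurd (h ⟨hxE, hg'⟩).2 (by rw [hf']; exact zero_ne_one)
      · exact hf'
    · rw [hg.2] at hsum
      rcases zmod2_cases (f (φ x)) with hf' | hf'
      · exact absurd (h hg).2 (by rw [hf']; exact zero_ne_one)
      · rw [hf'] at hsum; revert hsum; decide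
  · rintro ⟨⟨hxE, hf'⟩, hng⟩
    have hg' : g (φ x) = 0 := by
      rcases zmod2_cases (g (φ x)) with h0 | h1
      · exact h0
      · exact absurd ⟨hxE, h1⟩ hng
    refine ⟨hxE, by rw [hf', hg', add_zero]⟩

lemma exists_minimal_dep (hfin : M.E.Finite) {D : Set α} (hD : M✶.Dep D) :
    ∃ Q, Q ⊆ D ∧ Minimal M✶.Dep Q := by
  set s : Set ℕ := {n | ∃ Q, Q ⊆ D ∧ M✶.Dep Q ∧ Q.ncard = n} with hs
  have hsne : s.Nonempty := ⟨D.ncard, D, Subset.rfl, hD, rfl⟩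
  obtain ⟨Q, hQD, hQdep, hQcard⟩ := Nat.sInf_mem hsne
  refine ⟨Q, hQD, hQdep, fun Q' hQ' hQ'Q => ?_⟩
  have hQ'D : Q' ⊆ D := hQ'Q.trans hQD
  have h1 : sInf s ≤ Q'.ncard := Nat.sInf_le ⟨Q', hQ'D, hQ', rfl⟩
  have hfinQ : Q.Finite := hfin.subset hQdep.subset_ground
  have : Q' = Q := Set.eq_of_subset_of_ncard_le hQ'Q (by omega) hfinQ
  exact this.symm.subset

end Cocycle

section Count

variable {W : Type*} [AddCommGroup W] [Module (ZMod 2) W]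
variable {M : Matroid α} {φ : α → W} {T : Set α}

lemma cocyc_count (hM : IsRep M φ) (hfin : M.E.Finite)
    (hQ : ∀ Q : Set α, MCocircuit M Q → (Q ∩ T).Nonempty → 2 * (Q ∩ T).ncard ≤ Q.ncard)
    (f : W →ₗ[ZMod 2] ZMod 2) :
    2 * ((cocyc M φ f) ∩ T).ncard ≤ (cocyc M φ f).ncard := by
  suffices H : ∀ m (f : W →ₗ[ZMod 2] ZMod 2), (cocyc M φ f).ncard ≤ m →
      2 * ((cocyc M φ f) ∩ T).ncard ≤ (cocyc M φ f).ncard from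
    H (cocyc M φ f).ncard f le_rfl
  intro m
  induction m with
  | zero =>
    intro f hle
    have hfinC : (cocyc M φ f).Finite := hfin.subset cocyc_subset
    have : cocyc M φ f = ∅ := by
      rw [← Set.ncard_eq_zero hfinC]; omega
    simp [this]
  | succ m ih =>
    intro f hle
    rcases Set.eq_empty_or_nonempty (cocyc M φ f) with hemp | hne
    · simp [hemp]
    have hfinC : (cocyc M φ f).Finite := hfin.subset cocyc_subset
    have hdep := cocyc_dep hM hfin hne
    obtain ⟨Q, hQsub, hQmin⟩ := exists_minimal_dep hfin hdep
    obtain ⟨g, hgQ, hgne⟩ := dep_exists_cocyc hM hfin hQmin.prop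
    have hQg : Q = cocyc M φ g :=
      Subset.antisymm (hQmin.2 (cocyc_dep hM hfin hgne) hgQ) hgQ
    have hcc : MCocircuit M Q := hQmin
    have h1 : 2 * (Q ∩ T).ncard ≤ Q.ncard := by
      rcases Set.eq_empty_or_nonempty (Q ∩ T) with h | h
      · simp [h]
      · exact hQ Q hcc h
    have hgsubf : cocyc M φ g ⊆ cocyc M φ f := hQg ▸ hQsub
    have hdiff : cocyc M φ (f + g) = cocyc M φ f \ Q := by
      rw [cocyc_diff hgsubf, hQg]
    have hQfin : Q.Finite := hfinC.subset hQsub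
    have hQne : Q.Nonempty := hQg ▸ hgne
    have hQpos : 1 ≤ Q.ncard := Set.ncard_pos hQfin |>.2 hQne
    have e1 : (cocyc M φ f \ Q).ncard + Q.ncard = (cocyc M φ f).ncard :=
      Set.ncard_diff_add_ncard_of_subset hQsub hfinC
    have ihle : (cocyc M φ (f + g)).ncard ≤ m := by rw [hdiff]; omega
    have h2 := ih (f + g) ihle
    rw [hdiff] at h2
    have e2 : ((cocyc M φ f) ∩ T).ncard = (Q ∩ T).ncard + ((cocyc M φ f \ Q) ∩ T).ncard := by
      have hsplit : (cocyc M φ f) ∩ T = (Q ∩ T) ∪ ((cocyc M φ f \ Q) ∩ T) := by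
        rw [← Set.union_inter_distrib_right, Set.union_diff_cancel hQsub]
      rw [hsplit, Set.ncard_union_eq ?_ (hQfin.inter_of_left T) ((hfinC.diff (t := Q)).inter_of_left T)]
      exact (Set.disjoint_sdiff_right.mono_right inter_subset_left).mono_left inter_subset_left
    omega

end Count

section Main

variable {W : Type*} [AddCommGroup W] [Module (ZMod 2) W]

lemma ksep_symm {M : Matroid α} {k : ℕ} {A B : Set α} (h : IsKSeparation M k A B) :
    IsKSeparation M k B A := by
  obtain ⟨h1, h2, h3, h4, h5⟩ := h
  exact ⟨by rw [union_comm]; exact h1, h2.symm, h4, h3, by omega⟩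

lemma main_aux (n : ℕ) (M N : Matroid α) (φ : α → W) (hM : IsRep M φ)
    (hfin : M.E.Finite) (hconn : NConnected M n)
    (T : Set α) (hT : T ⊆ M.E) (hTcard : T.ncard = n - 1)
    (a : α) (haE : a ∉ M.E) (hNE : N.E = insert a M.E) (hNrep : IsRep N (splitRep φ T a))
    (hQ : ∀ Q : Set α, MCocircuit M Q → (Q ∩ T).Nonempty → 2 * (Q ∩ T).ncard ≤ Q.ncard)
    {k : ℕ} {A B : Set α} (hk1 : 1 ≤ k) (hkn : k < n)
    (hsep : IsKSeparation N k A B) (haB : a ∈ B) : False := by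
  set ψ := splitRep φ T a with hψdef
  have hNfin : N.E.Finite := hNE ▸ hfin.insert a
  obtain ⟨hAB, hdisj, hAcard, hBcard, hrank⟩ := hsep
  have haA : a ∉ A := fun h => (Set.disjoint_left.1 hdisj h) haB
  have hAE : A ⊆ M.E := by
    intro x hx
    have hxN : x ∈ N.E := by rw [← hAB]; exact Or.inl hx
    rw [hNE] at hxN
    rcases hxN with rfl | hxN
    · exact absurd hx haA
    · exact hxN
  set B' := B \ {a} with hB'def
  have haB' : a ∉ B' := fun h => h.2 rfl
  have hB'E : B' ⊆ M.E := by
    rintro x ⟨hxB, hxa⟩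
    have hxN : x ∈ N.E := by rw [← hAB]; exact Or.inr hxB
    rw [hNE] at hxN
    rcases hxN with rfl | hxN
    · exact absurd rfl hxa
    · exact hxN
  have hBeq : B = insert a B' := by
    rw [hB'def, Set.insert_diff_singleton, Set.insert_eq_self.2 haB]
  have hpart : A ∪ B' = M.E := by
    apply Subset.antisymm (union_subset hAE hB'E)
    intro x hx
    have hxa : x ≠ a := fun h => haE (h ▸ hx)
    have hxN : x ∈ A ∪ B := by rw [hAB, hNE]; exact Or.inr hx
    rcases hxN with h | h
    · exact Or.inl h
    · exact Or.inr ⟨h, hxa⟩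
  have hAfin : A.Finite := hfin.subset hAE
  have hB'fin : B'.Finite := hfin.subset hB'E
  have hBfin : B.Finite := hBeq ▸ hB'fin.insert a
  have hBcard' : B.ncard = B'.ncard + 1 := by
    rw [hBeq, Set.ncard_insert_of_notMem haB' hB'fin]
  -- basic facts about ψ
  have hψa : ψ a = ((0:W), (1:ZMod 2)) := by simp [hψdef, splitRep]
  have hψfst : ∀ X ⊆ M.E, Prod.fst '' (ψ '' X) = φ '' X := by
    intro X hX
    rw [← Set.image_comp]
    apply Set.image_congr
    intro x hx
    have hxa : x ≠ a := fun h => haE (h ▸ hX hx)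
    simp [hψdef, splitRep, hxa]
  have hψfin : ∀ X : Set α, X ⊆ M.E → (ψ '' X).Finite := fun X hX => (hfin.subset hX).image ψ
  -- rank identities
  have hrNE : mrank N N.E = mrank M M.E + 1 := by
    rw [mrank_eq_finrank hNrep hNfin Subset.rfl, mrank_eq_finrank hM hfin Subset.rfl, hNE,
      Set.image_insert_eq, hψa]
    rw [finrank_span_fst_of_mem (((hψfin _ Subset.rfl).insert _))
      (subset_span (mem_insert _ _))]
    rw [Set.image_insert_eq]
    simp only [Prod.fst]
    rw [Submodule.span_insert_zero, hψfst _ Subset.rfl]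
  have hrB : mrank N B = mrank M B' + 1 := by
    have hBN : B ⊆ N.E := by rw [← hAB]; exact subset_union_right
    rw [mrank_eq_finrank hNrep hNfin hBN, mrank_eq_finrank hM hfin hB'E, hBeq,
      Set.image_insert_eq, hψa]
    rw [finrank_span_fst_of_mem (((hψfin _ hB'E).insert _)) (subset_span (mem_insert _ _))]
    rw [Set.image_insert_eq]
    simp only [Prod.fst]
    rw [Submodule.span_insert_zero, hψfst _ hB'E]
  have hAN : A ⊆ N.E := by rw [← hAB]; exact subset_union_left
  have hdisj' : Disjoint A B' := hdisj.mono_right diff_subset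
  by_cases hmem : ((0:W), (1:ZMod 2)) ∈ span (ZMod 2) (ψ '' A)
  · -- case 1 : rank of A goes up
    have hrA : mrank N A = mrank M A + 1 := by
      rw [mrank_eq_finrank hNrep hNfin hAN, mrank_eq_finrank hM hfin hAE,
        finrank_span_fst_of_mem (hψfin _ hAE) hmem, hψfst _ hAE]
    rcases Nat.lt_or_ge k 2 with hk2 | hk2
    · -- k = 1 : contradict subadditivity
      have hk : k = 1 := by omega
      have hsub : mrank M M.E ≤ mrank M A + mrank M B' := by
        rw [mrank_eq_finrank hM hfin Subset.rfl, mrank_eq_finrank hM hfin hAE,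
          mrank_eq_finrank hM hfin hB'E, ← hpart, Set.image_union]
        exact finrank_span_union_le (hAfin.image φ) (hB'fin.image φ)
      omega
    · refine hconn (k-1) A B' (by omega) (by omega) ⟨hpart, hdisj', by omega, by omega, by omega⟩
  · -- case 2 : rank of A stays
    have hrA : mrank N A = mrank M A := by
      rw [mrank_eq_finrank hNrep hNfin hAN, mrank_eq_finrank hM hfin hAE,
        finrank_span_fst_of_not_mem (hψfin _ hAE) hmem, hψfst _ hAE]
    rcases Nat.lt_or_ge B'.ncard k with hB'k | hB'k
    swap
    · exact hconn k A B' hk1 hkn ⟨hpart, hdisj', hAcard, hB'k, by omega⟩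
    have hB'k : B'.ncard = k - 1 := by omega
    -- produce the cocycle
    obtain ⟨f, hf⟩ := exists_fun_of_notmem (ψ '' A) hmem
    have hfA : ∀ x ∈ A, (x ∈ T → f (φ x) = 1) ∧ (x ∉ T → f (φ x) = 0) := by
      intro x hx
      have hxa : x ≠ a := fun h => haE (h ▸ hAE hx)
      have h := hf (ψ x) (mem_image_of_mem _ hx)
      constructor <;> intro hxT <;> simp [hψdef, splitRep, hxa, hxT] at h <;> exact h
    set C := cocyc M φ f with hCdef
    have hcount : 2 * (C ∩ T).ncard ≤ C.ncard := cocyc_count hM hfin hQ f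
    have hCE : C ⊆ M.E := cocyc_subset
    have hCA : C ∩ A = T ∩ A := by
      ext x
      simp only [hCdef, cocyc, mem_inter_iff, mem_setOf_eq]
      constructor
      · rintro ⟨⟨hxE, hfx⟩, hxA⟩
        refine ⟨?_, hxA⟩
        by_contra hxT
        rw [(hfA x hxA).2 hxT] at hfx
        exact zero_ne_one hfx
      · rintro ⟨hxT, hxA⟩
        exact ⟨⟨hAE hxA, (hfA x hxA).1 hxT⟩, hxA⟩
    -- counting
    have hCfin : C.Finite := hfin.subset hCE
    have hTfin : T.Finite := hfin.subset hT
    have hCsplit : C.ncard = (C ∩ A).ncard + (C ∩ B').ncard := by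
      have : C = (C ∩ A) ∪ (C ∩ B') := by
        rw [← Set.inter_union_distrib_left, hpart, Set.inter_eq_left.2 hCE]
      rw [this, Set.ncard_union_eq
        ((hdisj'.mono_left inter_subset_right).mono_right inter_subset_right)
        (hCfin.inter_of_left _) (hCfin.inter_of_left _)]
      rw [← this]
    have hCTsplit : (C ∩ T).ncard = (T ∩ A).ncard + ((C ∩ B') ∩ T).ncard := by
      have h1 : C ∩ T = ((C ∩ A) ∩ T) ∪ ((C ∩ B') ∩ T) := by
        rw [← Set.union_inter_distrib_right, ← Set.inter_union_distrib_left, hpart,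
          Set.inter_eq_left.2 hCE]
      have h2 : (C ∩ A) ∩ T = T ∩ A := by
        rw [hCA]
        ext x; simp only [mem_inter_iff]; tauto
      rw [h1, h2, Set.ncard_union_eq
        (Set.disjoint_left.mpr fun {x} h1 h2 => (Set.disjoint_left.1 hdisj' h1.2) h2.1.2)
        (hTfin.inter_of_left _) ((hCfin.inter_of_left _).inter_of_left _)]
    have hCAcard : (C ∩ A).ncard = (T ∩ A).ncard := by rw [hCA]
    have hCB'split : (C ∩ B').ncard = ((C ∩ B') ∩ T).ncard + ((C ∩ B') \ T).ncard :=
      (Set.ncard_inter_add_ncard_diff_eq_ncard _ T (hCfin.inter_of_left _)).symm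
    have hD0le : ((C ∩ B') \ T).ncard ≤ (B' \ T).ncard :=
      Set.ncard_le_ncard (fun x hx => ⟨hx.1.2, hx.2⟩) (hB'fin.diff (t := T))
    have hB'Tsplit : (B' ∩ T).ncard + (B' \ T).ncard = B'.ncard :=
      Set.ncard_inter_add_ncard_diff_eq_ncard B' T hB'fin
    have hTsplit : (T ∩ A).ncard + (T ∩ B').ncard = n - 1 := by
      have h1 : T = (T ∩ A) ∪ (T ∩ B') := by
        rw [← Set.inter_union_distrib_left, hpart, Set.inter_eq_left.2 hT]
      rw [← hTcard]
      conv_rhs => rw [h1]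
      rw [Set.ncard_union_eq
        ((hdisj'.mono_left inter_subset_right).mono_right inter_subset_right)
        (hTfin.inter_of_left _) (hTfin.inter_of_left _)]
    have hcomm : (T ∩ B').ncard = (B' ∩ T).ncard := by rw [Set.inter_comm]
    have hd1le : ((C ∩ B') ∩ T).ncard ≤ (B' ∩ T).ncard :=
      Set.ncard_le_ncard (fun x hx => ⟨hx.1.2, hx.2⟩) (hB'fin.inter_of_left T)
    omega

end Main


end AuxLemmas

/-- If every cocircuit Q of M meeting T satisfies |Q| ≥ 2|Q ∩ T|, then M'_T is
n-connected. -/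
theorem eleSplit_nConnected_of_cocircuit_cond {α W : Type*}
    [AddCommGroup W] [Module (ZMod 2) W]
    (n : ℕ) (hn : 2 ≤ n) (M N : Matroid α) (φ : α → W) (hM : IsRep M φ)
    (hfin : M.E.Finite) (hcard : 2 * n - 2 ≤ M.E.ncard) (hconn : NConnected M n)
    (T : Set α) (hT : T ⊆ M.E) (hTcard : T.ncard = n - 1)
    (a : α) (hN : IsEleSplit M φ T a N)
    (hQ : ∀ Q : Set α, MCocircuit M Q → (Q ∩ T).Nonempty → 2 * (Q ∩ T).ncard ≤ Q.ncard) :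
    NConnected N n := by
  intro k A B hk1 hkn hsep
  obtain ⟨haE, hNE, hNrep⟩ := hN
  have haN : a ∈ N.E := by rw [hNE]; exact mem_insert _ _
  have haAB : a ∈ A ∪ B := by rw [hsep.1]; exact haN
  rcases haAB with haA | haB
  · exact main_aux n M N φ hM hfin hconn T hT hTcard a haE hNE hNrep hQ hk1 hkn
      (ksep_symm hsep) haA
  · exact main_aux n M N φ hM hfin hconn T hT hTcard a haE hNE hNrep hQ hk1 hkn hsep haB
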